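/- Let U = !![0,1;1,3] and for n ≥ 1 let U^{⊗n} denote the n-fold Kronecker (tensor) power of U, an element of GL_{2^n}(ℤ). Then for every n ≥ 1, ⋂_{k∈ℕ} range((1 − U^{⊗n})^k : ℤ^{2^n} → ℤ^{2^n}) = 0; that is, the n-th tensor power of ℤ² with the diagonal ⟨t⟩-action induced by U is a residually nilpotent ℤ[⟨t⟩]-module. -/

import Mathlib

namespace TensorPowerU

open Matrix

/-- The matrix `U = !![0,1;1,3] ∈ GL₂(ℤ)`. -/
def U : Matrix (Fin 2) (Fin 2) ℤ := !![0, 1; 1, 3]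

/-- `tpow n` is the `n`-fold Kronecker (tensor) power `U ⊗ U ⊗ ⋯ ⊗ U`,
reindexed as a `2^n × 2^n` integer matrix (`tpow 0 = 1`); it gives the
diagonal action of the generator `t` on `(ℤ²)^{⊗n} ≅ ℤ^{2^n}`. -/
def tpow : (n : ℕ) → Matrix (Fin (2 ^ n)) (Fin (2 ^ n)) ℤ
  | 0 => 1
  | n + 1 =>
    Matrix.reindex (finProdFinEquiv.trans (finCongr (by rw [pow_succ])))
      (finProdFinEquiv.trans (finCongr (by rw [pow_succ])))
      ((tpow n).kronecker U)

/-! ### Auxiliary material -/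

open Polynomial Kronecker

section IntegerSide

lemma Upow (m : ℕ) : ∃ p q : ℤ, U ^ m = !![p, q; q, p + 3 * q] ∧
    ((m = 0 ∧ p = 1 ∧ q = 0) ∨ (m = 1 ∧ p = 0 ∧ q = 1) ∨ (2 ≤ m ∧ 1 ≤ p ∧ 3 ≤ q)) := by
  induction m with
  | zero => exact ⟨1, 0, by rw [pow_zero, Matrix.one_fin_two]; norm_num, Or.inl ⟨rfl, rfl, rfl⟩⟩
  | succ k ih =>
    obtain ⟨p, q, hU, hc⟩ := ih
    refine ⟨q, p + 3 * q, ?_, ?_⟩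
    · rw [pow_succ, hU]
      show _ = !![q, p + 3*q; p + 3*q, q + 3*(p+3*q)]
      rw [U]
      norm_num [Matrix.mul_fin_two]
      ring_nf
      exact ⟨trivial, trivial⟩
    · rcases hc with ⟨h0, hp, hq⟩ | ⟨h1, hp, hq⟩ | ⟨h2, hp, hq⟩
      · exact Or.inr (Or.inl ⟨by omega, by omega, by omega⟩)
      · exact Or.inr (Or.inr ⟨by omega, by omega, by omega⟩)
      · exact Or.inr (Or.inr ⟨by omega, by omega, by omega⟩)

lemma det_one_sub_smul_Upow (e : ℤ) (he : e = 1 ∨ e = -1) (m : ℕ) :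
    ¬ IsUnit ((1 - e • U ^ m).det) := by
  obtain ⟨p, q, hU, hc⟩ := Upow m
  have hdU : U.det = -1 := by simp [U, Matrix.det_fin_two_of]
  have hdet : p * (p + 3 * q) - q * q = (-1) ^ m := by
    have h := Matrix.det_pow U m
    rw [hU, hdU] at h
    simpa [Matrix.det_fin_two_of] using h
  have hmat : (1 : Matrix (Fin 2) (Fin 2) ℤ) - e • !![p, q; q, p + 3 * q] =
      !![1 - e * p, -(e * q); -(e * q), 1 - e * (p + 3 * q)] := by
    ext i j
    fin_cases i <;> fin_cases j <;> simp [Matrix.one_fin_two] <;> ring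
  rw [hU, hmat, Matrix.det_fin_two_of, Int.isUnit_iff]
  have hsq : e * e = 1 := by rcases he with h | h <;> subst h <;> norm_num
  have hkey : (1 - e * p) * (1 - e * (p + 3 * q)) - -(e * q) * -(e * q)
      = 1 - e * (2 * p + 3 * q) + (-1) ^ m := by
    have : (1 - e * p) * (1 - e * (p + 3 * q)) - -(e * q) * -(e * q)
        = 1 - e * (2 * p + 3 * q) + (e * e) * (p * (p + 3 * q) - q * q) := by ring
    rw [this, hsq, hdet]; ring
  rw [hkey]
  have hs : (-1 : ℤ) ^ m = 1 ∨ (-1 : ℤ) ^ m = -1 := neg_one_pow_eq_or _ m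
  rcases hc with ⟨h0, hp, hq⟩ | ⟨h1, hp, hq⟩ | ⟨h2, hp, hq⟩
  · subst h0; rcases he with h | h <;> subst h <;> subst hp <;> subst hq <;> norm_num
  · subst h1; rcases he with h | h <;> subst h <;> subst hp <;> subst hq <;> norm_num
  · rcases he with h | h <;> subst h <;> rcases hs with h' | h' <;> rw [h'] <;> omega

noncomputable def fpoly : ℤ[X] := X ^ 2 - C 3 * X - C 1

lemma fpoly_monic : fpoly.Monic := by
  have : fpoly = X ^ 2 - (C 3 * X + C 1) := by rw [fpoly]; ring
  rw [this]
  exact monic_X_pow_sub (lt_of_le_of_lt degree_linear_le (by decide))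

lemma fpoly_degree : fpoly.degree = 2 := by
  have : fpoly = C 1 * X ^ 2 + C (-3) * X + C (-1) := by rw [fpoly]; ring_nf; simp [C_1]; ring
  rw [this]
  exact degree_quadratic one_ne_zero

lemma aeval_U_fpoly : aeval U fpoly = 0 := by
  rw [fpoly]
  simp only [map_sub, _root_.map_mul, aeval_X_pow, aeval_C, aeval_X, _root_.map_one, map_ofNat]
  ext i j
  rw [show ((3 : Matrix (Fin 2) (Fin 2) ℤ)) = Matrix.diagonal (fun _ => (3:ℤ)) from rfl]
  fin_cases i <;> fin_cases j <;>
    simp [U, pow_two, Matrix.mul_apply, Fin.sum_univ_two, Matrix.one_apply,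
      Matrix.diagonal_apply]

lemma aeval_U_of_aeval_root {r : ℝ} (hr : r ^ 2 = 3 * r + 1) (hirr : Irrational r)
    (H : ℤ[X]) (h : aeval r H = 0) : aeval U H = 0 := by
  have hfr : aeval r fpoly = 0 := by
    rw [fpoly]
    simp only [map_sub, _root_.map_mul, aeval_X_pow, aeval_C, aeval_X, _root_.map_one,
      map_ofNat, algebraMap_int_eq, eq_intCast]
    nlinarith [hr]
  have hdiv := modByMonic_add_div H fpoly
  have hdeg : (H %ₘ fpoly).degree ≤ 1 := by
    have := degree_modByMonic_lt H fpoly_monic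
    rw [fpoly_degree] at this
    exact Order.lt_succ_iff.mp (by exact_mod_cast this)
  have hRform := eq_X_add_C_of_degree_le_one hdeg
  have h0 : aeval r (H %ₘ fpoly) = 0 := by
    have h2 := congrArg (aeval r) hdiv
    simp only [map_add, _root_.map_mul, hfr, zero_mul, add_zero, h] at h2
    exact h2
  have hab : (((H %ₘ fpoly).coeff 1 : ℝ)) * r + (((H %ₘ fpoly).coeff 0 : ℝ)) = 0 := by
    rw [hRform] at h0
    simpa [algebraMap_int_eq, eq_intCast] using h0
  have hb : (H %ₘ fpoly).coeff 1 = 0 := by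
    by_contra hb
    apply hirr.ne_rat ((- (H %ₘ fpoly).coeff 0 : ℚ) / ((H %ₘ fpoly).coeff 1 : ℚ))
    have hbR : (((H %ₘ fpoly).coeff 1 : ℤ) : ℝ) ≠ 0 := Int.cast_ne_zero.mpr hb
    have hbQ : (((H %ₘ fpoly).coeff 1 : ℤ) : ℚ) ≠ 0 := Int.cast_ne_zero.mpr hb
    rw [Rat.cast_div]
    push_cast
    field_simp
    linarith [hab]
  have ha : (H %ₘ fpoly).coeff 0 = 0 := by
    rw [hb] at hab; simpa using hab
  have hR0 : H %ₘ fpoly = 0 := by rw [hRform, hb, ha]; simp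
  have h3 := congrArg (aeval U) hdiv
  simp only [hR0, map_add, _root_.map_mul, aeval_U_fpoly, zero_mul, map_zero, zero_add] at h3
  rw [← h3]

end IntegerSide

section RealSide

noncomputable def lam : ℝ := (3 + Real.sqrt 13) / 2
noncomputable def mu : ℝ := (3 - Real.sqrt 13) / 2

lemma s13 : Real.sqrt 13 ^ 2 = 13 := Real.sq_sqrt (by norm_num)

lemma lam_sq : lam ^ 2 = 3 * lam + 1 := by
  rw [lam]; field_simp; nlinarith [s13]

lemma mu_sq : mu ^ 2 = 3 * mu + 1 := by
  rw [mu]; field_simp; nlinarith [s13]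

lemma lam_mul_mu : lam * mu = -1 := by
  rw [lam, mu]; field_simp; nlinarith [s13]

lemma irr13 : Irrational (Real.sqrt 13) := by
  have := (by norm_num : Nat.Prime 13).irrational_sqrt
  simpa using this

lemma irr_lam : Irrational lam := by
  have h1 : Irrational ((3:ℤ) + Real.sqrt 13) := irr13.intCast_add 3
  have h2 := h1.div_intCast (by norm_num : (2:ℤ) ≠ 0)
  rw [lam]
  simpa using h2

lemma irr_mu : Irrational mu := by
  have h1 : Irrational ((3:ℤ) + -Real.sqrt 13) := irr13.neg.intCast_add 3
  have h2 := h1.div_intCast (by norm_num : (2:ℤ) ≠ 0)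
  rw [mu]
  have : (3:ℝ) - Real.sqrt 13 = (3:ℤ) + -Real.sqrt 13 := by push_cast; ring
  rw [this]
  simpa using h2

/-- the eigenvalue property -/
def EV (x : ℝ) : Prop :=
  ∃ e : ℤ, (e = 1 ∨ e = -1) ∧ ∃ m : ℕ, x = (e : ℝ) * lam ^ m ∨ x = (e : ℝ) * mu ^ m

lemma EV_one : EV 1 := ⟨1, Or.inl rfl, 0, Or.inl (by norm_num)⟩

lemma EV_mul_lam (x : ℝ) (h : EV x) : EV (x * lam) := by
  obtain ⟨e, he, m, hx | hx⟩ := h <;> subst hx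
  · exact ⟨e, he, m + 1, Or.inl (by ring)⟩
  · cases m with
    | zero => exact ⟨e, he, 1, Or.inl (by norm_num)⟩
    | succ k =>
      refine ⟨-e, by omega, k, Or.inr ?_⟩
      push_cast
      have : (e:ℝ) * mu ^ (k+1) * lam = (e:ℝ) * mu ^ k * (lam * mu) := by ring
      rw [this, lam_mul_mu]; ring

lemma EV_mul_mu (x : ℝ) (h : EV x) : EV (x * mu) := by
  obtain ⟨e, he, m, hx | hx⟩ := h <;> subst hx
  · cases m with
    | zero => exact ⟨e, he, 1, Or.inr (by norm_num)⟩
    | succ k =>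
      refine ⟨-e, by omega, k, Or.inl ?_⟩
      push_cast
      have : (e:ℝ) * lam ^ (k+1) * mu = (e:ℝ) * lam ^ k * (lam * mu) := by ring
      rw [this, lam_mul_mu]; ring
  · exact ⟨e, he, m + 1, Or.inr (by ring)⟩

lemma EV_mul (x : ℝ) (j : Fin 2) (h : EV x) : EV (x * (![lam, mu] j)) := by
  fin_cases j
  · exact EV_mul_lam x h
  · exact EV_mul_mu x h

lemma key_scalar_aux (c : ℤ[X]) (e : ℤ) (he : e = 1 ∨ e = -1) (m : ℕ) {r : ℝ}
    (hr : r ^ 2 = 3 * r + 1) (hirr : Irrational r)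
    (h : 1 - (aeval ((e : ℝ) * r ^ m) c) * (1 - (e : ℝ) * r ^ m) = 0) : False := by
  set g : ℤ[X] := C e * X ^ m with hg
  set H : ℤ[X] := c.comp g * (1 - g) - C 1 with hH
  have hgr : aeval r g = (e : ℝ) * r ^ m := by
    simp [hg, algebraMap_int_eq, eq_intCast]
  have hHr : aeval r H = 0 := by
    simp only [hH, map_sub, _root_.map_mul, _root_.map_one, aeval_comp, hgr, aeval_C,
      algebraMap_int_eq, eq_intCast, Int.cast_one]
    linarith [h]
  have hHU := aeval_U_of_aeval_root hr hirr H hHr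
  have hWU : aeval U g = e • U ^ m := by
    simp only [hg, _root_.map_mul, aeval_C, aeval_X_pow]
    rw [← Algebra.smul_def]
  rw [hH] at hHU
  simp only [map_sub, _root_.map_mul, aeval_comp, hWU, _root_.map_one, aeval_C] at hHU
  have hmul : aeval (e • U ^ m) c * (1 - e • U ^ m) = 1 := sub_eq_zero.mp hHU
  have hdet : ((aeval (e • U ^ m) c).det) * ((1 - e • U ^ m).det) = 1 := by
    rw [← Matrix.det_mul, hmul, Matrix.det_one]
  exact det_one_sub_smul_Upow e he m
    (IsUnit.of_mul_eq_one _ (by rw [mul_comm] at hdet; exact hdet))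

lemma key_scalar (c : ℤ[X]) (x : ℝ) (hx : EV x) :
    1 - (aeval x c) * (1 - x) ≠ 0 := by
  intro h
  obtain ⟨e, he, m, hx' | hx'⟩ := hx
  · exact key_scalar_aux c e he m lam_sq irr_lam (by rw [← hx']; exact h)
  · exact key_scalar_aux c e he m mu_sq irr_mu (by rw [← hx']; exact h)

end RealSide

section KroneckerPowers

variable {α : Type} {β : Type}

def kpow [CommSemiring α] (M : Matrix (Fin 2) (Fin 2) α) :
    (n : ℕ) → Matrix (Fin (2 ^ n)) (Fin (2 ^ n)) α
  | 0 => 1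
  | n + 1 =>
    Matrix.reindex (finProdFinEquiv.trans (finCongr (by rw [pow_succ])))
      (finProdFinEquiv.trans (finCongr (by rw [pow_succ])))
      ((kpow M n).kronecker M)

lemma tpow_eq_kpow (n : ℕ) : tpow n = kpow U n := by
  induction n with
  | zero => rfl
  | succ k ih => rw [tpow, kpow, ih]

lemma kpow_mul [CommSemiring α] (M N : Matrix (Fin 2) (Fin 2) α) (n : ℕ) :
    kpow M n * kpow N n = kpow (M * N) n := by
  induction n with
  | zero => rw [kpow, one_mul]; rfl
  | succ k ih =>
    rw [kpow, kpow, kpow]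
    simp only [Matrix.kronecker]
    rw [Matrix.reindex_apply, Matrix.reindex_apply, Matrix.reindex_apply,
      Matrix.submatrix_mul_equiv, ← Matrix.mul_kronecker_mul, ih]

lemma kpow_map [CommSemiring α] [CommSemiring β] (f : α →+* β) (M : Matrix (Fin 2) (Fin 2) α)
    (n : ℕ) : (kpow M n).map f = kpow (M.map f) n := by
  induction n with
  | zero => exact Matrix.map_one f f.map_zero f.map_one
  | succ k ih =>
    rw [kpow, kpow]
    simp only [Matrix.kronecker]
    rw [Matrix.reindex_apply, Matrix.reindex_apply, ← Matrix.submatrix_map, ← ih]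
    ext ⟨i1, i2⟩ ⟨j1, j2⟩
    simp [Matrix.kroneckerMap_apply]

lemma reindex_diagonal {m m' : Type*} [DecidableEq m] [DecidableEq m'] [Zero α]
    (e : m ≃ m') (v : m → α) :
    Matrix.reindex e e (Matrix.diagonal v) = Matrix.diagonal (v ∘ e.symm) := by
  ext i j
  rcases eq_or_ne i j with rfl | hij
  · simp [Matrix.diagonal_apply]
  · have : e.symm i ≠ e.symm j := fun h => hij (e.symm.injective h)
    simp [Matrix.diagonal_apply, hij, this]

lemma kpow_diagonal [CommSemiring α] (v : Fin 2 → α) (n : ℕ) (P : α → Prop) (h1 : P 1)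
    (hcl : ∀ x j, P x → P (x * v j)) :
    ∃ d : Fin (2 ^ n) → α, kpow (Matrix.diagonal v) n = Matrix.diagonal d ∧ ∀ i, P (d i) := by
  induction n with
  | zero => exact ⟨fun _ => 1, by rw [kpow, Matrix.diagonal_one], fun _ => h1⟩
  | succ k ih =>
    obtain ⟨d, hd, hP⟩ := ih
    refine ⟨(fun p => d p.1 * v p.2) ∘
      (finProdFinEquiv.trans (finCongr (by rw [pow_succ] : 2 ^ k * 2 = 2 ^ (k+1)))).symm, ?_, ?_⟩
    · rw [kpow, hd]
      simp only [Matrix.kronecker]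
      rw [Matrix.diagonal_kronecker_diagonal, reindex_diagonal]
    · rintro i
      exact hcl _ _ (hP _)

end KroneckerPowers

section RealMatrices

noncomputable def Ur : Matrix (Fin 2) (Fin 2) ℝ := !![0, 1; 1, 3]
noncomputable def Vr : Matrix (Fin 2) (Fin 2) ℝ := !![1, 1; lam, mu]

lemma det_Vr : Vr.det ≠ 0 := by
  have h : Vr.det = mu - lam := by simp [Vr, Matrix.det_fin_two_of]
  have : lam ≠ mu := by
    rw [lam, mu]
    have : Real.sqrt 13 > 0 := Real.sqrt_pos.mpr (by norm_num)
    intro hcon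
    rw [div_eq_div_iff (by norm_num) (by norm_num)] at hcon
    nlinarith
  rw [h]
  intro hcon
  exact this (sub_eq_zero.mp hcon).symm

lemma kpow_det_ne_zero {M : Matrix (Fin 2) (Fin 2) ℝ} (h : M.det ≠ 0) (n : ℕ) :
    (kpow M n).det ≠ 0 := by
  induction n with
  | zero => rw [kpow]; simp
  | succ k ih =>
    rw [kpow, Matrix.reindex_apply, Matrix.det_submatrix_equiv_self]
    simp only [Matrix.kronecker]
    rw [Matrix.det_kronecker]
    exact mul_ne_zero (pow_ne_zero _ ih) (pow_ne_zero _ h)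

lemma UV : Ur * Vr = Vr * Matrix.diagonal ![lam, mu] := by
  have hl := lam_sq
  have hm := mu_sq
  ext i j
  fin_cases i <;> fin_cases j <;>
    simp [Ur, Vr, Matrix.mul_apply, Fin.sum_univ_two, Matrix.diagonal_apply] <;> nlinarith

noncomputable def Br (n : ℕ) := kpow Ur n
noncomputable def Dn (n : ℕ) := kpow (Matrix.diagonal ![lam, mu]) n
noncomputable def Vn (n : ℕ) := kpow Vr n

lemma BV (n : ℕ) : Br n * Vn n = Vn n * Dn n := by
  rw [Br, Vn, Dn, kpow_mul, UV, ← kpow_mul]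

lemma aeval_BV (n : ℕ) (c : ℤ[X]) :
    (aeval (Br n) c) * Vn n = Vn n * (aeval (Dn n) c) := by
  induction c using Polynomial.induction_on with
  | C a =>
    simp only [aeval_C]
    rw [Algebra.commutes a (Vn n)]
  | add p q hp hq =>
    simp only [map_add, add_mul, mul_add, hp, hq]
  | monomial k a ih =>
    simp only [_root_.map_mul, aeval_C, aeval_X_pow] at ih ⊢
    rw [pow_succ (Br n) k, ← mul_assoc (algebraMap ℤ _ a) (Br n ^ k) (Br n),
      mul_assoc (algebraMap ℤ _ a * Br n ^ k) (Br n) (Vn n), BV,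
      ← mul_assoc (algebraMap ℤ _ a * Br n ^ k) (Vn n) (Dn n), ih,
      mul_assoc (Vn n) (algebraMap ℤ _ a * Dn n ^ k) (Dn n),
      mul_assoc (algebraMap ℤ _ a) (Dn n ^ k) (Dn n), ← pow_succ (Dn n) k]

lemma aeval_diagonal {N : Type} [Fintype N] [DecidableEq N] (d : N → ℝ) (c : ℤ[X]) :
    aeval (Matrix.diagonal d) c = Matrix.diagonal (fun i => aeval (d i) c) := by
  have h1 := Polynomial.aeval_algHom_apply ((Matrix.diagonalRingHom N ℝ).toIntAlgHom) d c
  simp only [RingHom.toIntAlgHom_coe, Matrix.diagonalRingHom_apply] at h1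
  refine h1.trans ?_
  have h2 : (aeval d c : N → ℝ) = fun i => aeval (d i) c := by
    funext i
    exact (Polynomial.aeval_algHom_apply ((Pi.evalRingHom (fun _ : N => ℝ) i).toIntAlgHom) d c).symm
  rw [h2]

lemma conj_helper {R : Type} [Ring R] (B V D C Cd : R) (h1 : C * V = V * Cd)
    (h2 : B * V = V * D) : (1 - C * (1 - B)) * V = V * (1 - Cd * (1 - D)) := by
  have e1 : (1 - C * (1 - B)) * V = V - C * V + C * (B * V) := by noncomm_ring
  rw [e1, h2, h1, ← mul_assoc C V D, h1]
  noncomm_ring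

lemma det_key (n : ℕ) (c : ℤ[X]) :
    ((1 - (aeval (kpow U n) c) * (1 - kpow U n)).map (Int.cast : ℤ → ℝ)).det ≠ 0 := by
  have hU : U.map (Int.cast : ℤ → ℝ) = Ur := by
    ext i j; fin_cases i <;> fin_cases j <;> simp [U, Ur]
  have h1 : (Int.castRingHom ℝ).mapMatrix (kpow U n) = Br n := by
    rw [RingHom.mapMatrix_apply, kpow_map, Br]
    congr 1
  have h2 : (Int.castRingHom ℝ).mapMatrix (aeval (kpow U n) c) = aeval (Br n) c := by
    rw [← h1]
    exact (Polynomial.aeval_algHom_apply ((Int.castRingHom ℝ).mapMatrix.toIntAlgHom)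
      (kpow U n) c).symm
  have hcast : (1 - (aeval (kpow U n) c) * (1 - kpow U n)).map (Int.cast : ℤ → ℝ)
      = 1 - (aeval (Br n) c) * (1 - Br n) := by
    have hmm : (1 - (aeval (kpow U n) c) * (1 - kpow U n)).map (Int.cast : ℤ → ℝ)
        = (Int.castRingHom ℝ).mapMatrix (1 - (aeval (kpow U n) c) * (1 - kpow U n)) := rfl
    rw [hmm, map_sub, _root_.map_one, _root_.map_mul, map_sub, _root_.map_one, h1, h2]
  rw [hcast]
  obtain ⟨d, hD, hEV⟩ := kpow_diagonal ![lam, mu] n EV EV_one EV_mul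
  have hconj := conj_helper (Br n) (Vn n) (Dn n) (aeval (Br n) c) (aeval (Dn n) c)
    (aeval_BV n c) (BV n)
  have hdet : (1 - aeval (Br n) c * (1 - Br n)).det * (Vn n).det
      = (Vn n).det * (1 - aeval (Dn n) c * (1 - Dn n)).det := by
    rw [← Matrix.det_mul, ← Matrix.det_mul, hconj]
  have hVd : (Vn n).det ≠ 0 := kpow_det_ne_zero det_Vr n
  have hDn : (1 - aeval (Dn n) c * (1 - Dn n))
      = Matrix.diagonal (fun i => 1 - aeval (d i) c * (1 - d i)) := by
    rw [Dn, hD, aeval_diagonal, ← Matrix.diagonal_one]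
    rw [Matrix.diagonal_sub, Matrix.diagonal_mul_diagonal, Matrix.diagonal_sub]
  have hDd : (1 - aeval (Dn n) c * (1 - Dn n)).det ≠ 0 := by
    rw [hDn, Matrix.det_diagonal]
    exact Finset.prod_ne_zero_iff.mpr (fun i _ => key_scalar c (d i) (hEV i))
  have hL : (1 - aeval (Br n) c * (1 - Br n)).det
      = (1 - aeval (Dn n) c * (1 - Dn n)).det := by
    have h5 := hdet
    rw [mul_comm ((Vn n).det) _] at h5
    exact mul_right_cancel₀ hVd h5
  rw [hL]
  exact hDd

lemma det_key_tpow (n : ℕ) (c : ℤ[X]) :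
    ((1 - (aeval (tpow n) c) * (1 - tpow n)).map (Int.cast : ℤ → ℝ)).det ≠ 0 := by
  rw [tpow_eq_kpow]
  exact det_key n c

end RealMatrices

/-- For every `n ≥ 1`, `⋂_k range((1 − U^{⊗n})^k) = 0`: the `n`-th tensor power
of `ℤ²` with the diagonal `⟨t⟩`-action induced by `U` is a residually
nilpotent `ℤ[⟨t⟩]`-module. -/
theorem tensor_power_residually_nilpotent (n : ℕ) (hn : 1 ≤ n) :
    (⨅ k : ℕ, LinearMap.range ((Matrix.toLin' (1 - tpow n)) ^ k)) = ⊥ := by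
  classical
  set b : (Fin (2 ^ n) → ℤ) →ₗ[ℤ] (Fin (2 ^ n) → ℤ) := Matrix.toLin' (tpow n) with hb
  set A : (Fin (2 ^ n) → ℤ) →ₗ[ℤ] (Fin (2 ^ n) → ℤ) := Matrix.toLin' (1 - tpow n) with hA
  have hAb : A = 1 - b := by
    rw [hA, map_sub, hb]
    congr 1
    exact Matrix.toLin'_one
  rw [eq_bot_iff]
  intro x hx
  simp only [Submodule.mem_iInf] at hx
  set I : Ideal ℤ[X] := Ideal.span {1 - X} with hI
  have hmem : (Module.AEval'.of b) x ∈
      (⨅ i : ℕ, I ^ i • ⊤ : Submodule ℤ[X] (Module.AEval' b)) := by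
    rw [Submodule.mem_iInf]
    intro i
    obtain ⟨y, hy⟩ := LinearMap.mem_range.mp (hx i)
    rw [hI, Ideal.span_singleton_pow, Submodule.ideal_span_singleton_smul]
    have key : ((1 - X : ℤ[X]) ^ i) • (Module.AEval'.of b y) = Module.AEval'.of b x := by
      rw [← Module.AEval.of_aeval_smul]
      congr 1
      have : aeval b ((1 - X : ℤ[X]) ^ i) = A ^ i := by
        rw [map_pow, map_sub, aeval_X, _root_.map_one, hAb]
      rw [this]
      exact hy
    rw [← key]
    exact Submodule.smul_mem_pointwise_smul _ _ _ Submodule.mem_top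
  obtain ⟨r, hr⟩ := (Ideal.mem_iInf_smul_pow_eq_bot_iff I ((Module.AEval'.of b) x)).mp hmem
  obtain ⟨c, hc⟩ := Ideal.mem_span_singleton'.mp r.2
  have hrx : aeval b (c * (1 - X)) x = x := by
    have h1 : (r : ℤ[X]) • (Module.AEval'.of b) x =
        (Module.AEval'.of b) (aeval b (r : ℤ[X]) x) :=
      (Module.AEval.of_aeval_smul b (r : ℤ[X]) x).symm
    rw [h1] at hr
    have h2 := (Module.AEval'.of b).injective hr
    rw [← hc] at h2
    exact h2
  have hmul : aeval b (c * (1 - X)) = Matrix.toLin' ((aeval (tpow n) c) * (1 - tpow n)) := by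
    have hbeq : b = Matrix.toLinAlgEquiv' (tpow n) := by
      apply LinearMap.ext
      intro v
      rw [hb, Matrix.toLin'_apply, Matrix.toLinAlgEquiv'_apply]
    have h2 : aeval b c = Matrix.toLin' (aeval (tpow n) c) := by
      rw [hbeq, Polynomial.aeval_algHom_apply
        (Matrix.toLinAlgEquiv' : Matrix (Fin (2^n)) (Fin (2^n)) ℤ ≃ₐ[ℤ] _) (tpow n) c]
      apply LinearMap.ext
      intro v
      rw [Matrix.toLin'_apply, Matrix.toLinAlgEquiv'_apply]
    rw [_root_.map_mul, h2, map_sub, aeval_X, _root_.map_one, ← hAb, hA,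
      Matrix.toLin'_mul]
    rfl
  rw [hmul] at hrx
  have hzero : (1 - (aeval (tpow n) c) * (1 - tpow n)) *ᵥ x = 0 := by
    have h6 := hrx
    rw [Matrix.toLin'_apply] at h6
    rw [Matrix.sub_mulVec, Matrix.one_mulVec, h6]
    simp
  set G : Matrix (Fin (2 ^ n)) (Fin (2 ^ n)) ℤ := 1 - (aeval (tpow n) c) * (1 - tpow n) with hG
  have hcast : (G.map (Int.cast : ℤ → ℝ)) *ᵥ (fun i => (x i : ℝ)) = 0 := by
    funext i
    simp only [Pi.zero_apply]
    have h0 : (G *ᵥ x) i = 0 := by rw [hzero]; rfl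
    have h0' : ((G *ᵥ x) i : ℝ) = 0 := by rw [h0]; norm_num
    rw [← h0']
    simp only [Matrix.mulVec, dotProduct, Matrix.map_apply]
    push_cast
    rfl
  have hdet := det_key_tpow n c
  have hunit : IsUnit (G.map (Int.cast : ℤ → ℝ)) := by
    rw [Matrix.isUnit_iff_isUnit_det]
    exact isUnit_iff_ne_zero.mpr hdet
  have hxR : (fun i => (x i : ℝ)) = 0 := by
    have h1 : (G.map (Int.cast : ℤ → ℝ))⁻¹ * (G.map (Int.cast : ℤ → ℝ)) = 1 :=
      Matrix.nonsing_inv_mul _ ((Matrix.isUnit_iff_isUnit_det _).mp hunit)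
    calc (fun i => (x i : ℝ)) = (1 : Matrix _ _ ℝ) *ᵥ (fun i => (x i : ℝ)) := by
          rw [Matrix.one_mulVec]
      _ = ((G.map (Int.cast : ℤ → ℝ))⁻¹ * (G.map (Int.cast : ℤ → ℝ))) *ᵥ (fun i => (x i : ℝ)) := by
          rw [h1]
      _ = (G.map (Int.cast : ℤ → ℝ))⁻¹ *ᵥ ((G.map (Int.cast : ℤ → ℝ)) *ᵥ (fun i => (x i : ℝ))) := by
          rw [Matrix.mulVec_mulVec]
      _ = 0 := by rw [hcast, Matrix.mulVec_zero]
  rw [Submodule.mem_bot]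
  funext i
  have hcoord := congrFun hxR i
  simp only [Pi.zero_apply] at hcoord ⊢
  exact_mod_cast hcoord

end TensorPowerU
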